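/- Let $G_1$ and $G_2$ be connected graphs on disjoint vertex sets $[n_1]$ and $[n_2]$, and let $G = G_1 * G_2$ be their join. Then a nonempty subset $T$ of $[n_1] \cup [n_2]$ has the cut point property for $G$ if and only if either $T = T_1 \cup [n_2]$ for some nonempty $T_1$ having the cut point property for $G_1$, or $T = T_2 \cup [n_1]$ for some nonempty $T_2$ having the cut point property for $G_2$. -/

import Mathlib

open SimpleGraph Set

/-- Number of connected components of the induced subgraph of `G` on `s`. -/
noncomputable def nc {V : Type*} (G : SimpleGraph V) (s : Set V) : ℕ :=
  Nat.card (G.induce s).ConnectedComponent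

/-- `T` has the cut point property for `G`: every `i ∈ T` is a cut point of the
induced subgraph on `Tᶜ ∪ {i}` (removing `i` increases the number of components). -/
def CutPointProperty {V : Type*} (G : SimpleGraph V) (T : Set V) : Prop :=
  ∀ i ∈ T, nc G (Tᶜ ∪ {i}) < nc G Tᶜ

/-- The join `G₁ * G₂` of two graphs on disjoint vertex sets. -/
def joinGraph {V₁ V₂ : Type*} (G₁ : SimpleGraph V₁) (G₂ : SimpleGraph V₂) :
    SimpleGraph (V₁ ⊕ V₂) where
  Adj v w :=
    match v, w with
    | Sum.inl a, Sum.inl b => G₁.Adj a b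
    | Sum.inr a, Sum.inr b => G₂.Adj a b
    | Sum.inl _, Sum.inr _ => True
    | Sum.inr _, Sum.inl _ => True
  symm := by refine ⟨?_⟩; rintro (a | a) (b | b) h <;> simp_all <;> exact h.symm
  loopless := by refine ⟨?_⟩; rintro (a | a) h <;> simp_all

/-- Disjoint union of an indexed family of graphs. -/
def sigmaGraph {ι : Type*} {V : ι → Type*} (G : ∀ i, SimpleGraph (V i)) :
    SimpleGraph (Σ i, V i) where
  Adj v w := ∃ h : v.1 = w.1, (G w.1).Adj (h ▸ v.2) w.2
  symm := by
    refine ⟨?_⟩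
    rintro ⟨i, a⟩ ⟨j, b⟩ ⟨h, hab⟩
    dsimp at h hab ⊢
    subst h
    exact ⟨rfl, hab.symm⟩
  loopless := by
    refine ⟨?_⟩
    rintro ⟨i, a⟩ ⟨h, hab⟩
    dsimp at h hab
    exact (G i).irrefl hab
/-- The corona `H ⊙ H'`: one copy of `H'` for each vertex `v` of `H`,
with every vertex of the copy joined to `v`. -/
def coronaGraph {V₁ V₂ : Type*} (H : SimpleGraph V₁) (H' : SimpleGraph V₂) :
    SimpleGraph (V₁ ⊕ V₁ × V₂) where
  Adj v w :=
    match v, w with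
    | Sum.inl a, Sum.inl b => H.Adj a b
    | Sum.inl a, Sum.inr p => a = p.1
    | Sum.inr p, Sum.inl b => p.1 = b
    | Sum.inr p, Sum.inr q => p.1 = q.1 ∧ H'.Adj p.2 q.2
  symm := by
    refine ⟨?_⟩
    rintro (a | p) (b | q) h <;> dsimp at h ⊢
    · exact h.symm
    · exact h.symm
    · exact h.symm
    · exact ⟨h.1.symm, h.2.symm⟩
  loopless := by refine ⟨?_⟩; rintro (a | p) h <;> simp_all

/-- The whisker graph `W(H)`: a pendant vertex attached to each vertex of `H`. -/
def whiskerGraph {V : Type*} (H : SimpleGraph V) : SimpleGraph (V ⊕ V) where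
  Adj v w :=
    match v, w with
    | Sum.inl a, Sum.inl b => H.Adj a b
    | Sum.inl a, Sum.inr b => a = b
    | Sum.inr a, Sum.inl b => a = b
    | Sum.inr _, Sum.inr _ => False
  symm := by refine ⟨?_⟩; rintro (a | a) (b | b) h <;> simp_all; exact h.symm
  loopless := by refine ⟨?_⟩; rintro (a | a) h <;> simp_all

/-- `F` is (the vertex set of) a maximal clique of `G`. -/
def MaxClique {V : Type*} (G : SimpleGraph V) (F : Set V) : Prop :=
  Maximal G.IsClique F

/-- A graph is chordal if every cycle of length at least 4 has a chord. -/
def IsChordal {V : Type*} (G : SimpleGraph V) : Prop :=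
  ∀ (n : ℕ), 4 ≤ n → ∀ c : ℕ → V, Set.InjOn c (Set.Iio n) →
    (∀ i < n, G.Adj (c i) (c ((i + 1) % n))) →
    ∃ i < n, ∃ j < n, j ≠ i ∧ j ≠ (i + 1) % n ∧ i ≠ (j + 1) % n ∧ G.Adj (c i) (c j)

/-- A generalized block graph: a connected chordal graph in which any three distinct
maximal cliques with nonempty common intersection have all pairwise intersections equal. -/
def GenBlockGraph {V : Type*} (G : SimpleGraph V) : Prop :=
  G.Connected ∧ IsChordal G ∧
    ∀ F₁ F₂ F₃ : Set V, MaxClique G F₁ → MaxClique G F₂ → MaxClique G F₃ →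
      F₁ ≠ F₂ → F₁ ≠ F₃ → F₂ ≠ F₃ → (F₁ ∩ F₂ ∩ F₃).Nonempty →
      F₁ ∩ F₂ = F₁ ∩ F₃ ∧ F₁ ∩ F₂ = F₂ ∩ F₃

/-- `A` is a cut set of `G`: deleting `A` increases the number of connected components. -/
def IsCutSet {V : Type*} (G : SimpleGraph V) (A : Set V) : Prop :=
  nc G Set.univ < nc G Aᶜ

/-- `A` is an inclusion-minimal cut set of `G`. -/
def IsMinCutSet {V : Type*} (G : SimpleGraph V) (A : Set V) : Prop :=
  IsCutSet G A ∧ ∀ B ⊂ A, ¬ IsCutSet G B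

/-- `A` is a `t`-minimal cut set of `G`: a minimal cut set which is the common
intersection of exactly `t` maximal cliques of `G` and disjoint from all other
maximal cliques. -/
def IsTMinCut {V : Type*} (G : SimpleGraph V) (t : ℕ) (A : Set V) : Prop :=
  IsMinCutSet G A ∧
  {F : Set V | MaxClique G F ∧ A ⊆ F}.ncard = t ∧
  ⋂₀ {F : Set V | MaxClique G F ∧ A ⊆ F} = A ∧
  ∀ F : Set V, MaxClique G F → ¬ A ⊆ F → F ∩ A = ∅

/-- `B` is a branch of the facet `F` in the clique complex of `G`. -/
def IsBranch {V : Type*} (G : SimpleGraph V) (F B : Set V) : Prop :=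
  MaxClique G B ∧ B ≠ F ∧ ∀ H : Set V, MaxClique G H → H ≠ F → H ∩ F ⊆ B ∩ F

/-- `F` is a leaf of the clique complex of `G`. -/
def IsLeafClique {V : Type*} (G : SimpleGraph V) (F : Set V) : Prop :=
  MaxClique G F ∧ ((∀ F' : Set V, MaxClique G F' → F' = F) ∨ ∃ B, IsBranch G F B)

lemma nc_eq_one_of_connected {V : Type*} {G : SimpleGraph V} {s : Set V}
    (h : (G.induce s).Connected) : nc G s = 1 := by
  have : Subsingleton (G.induce s).ConnectedComponent := by
    constructor
    refine ConnectedComponent.ind₂ (fun u v => ?_)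
    exact ConnectedComponent.sound (h.preconnected u v)
  have : Nonempty (G.induce s).ConnectedComponent := by
    obtain ⟨v⟩ := h.nonempty
    exact ⟨(G.induce s).connectedComponentMk v⟩
  exact Nat.card_unique

lemma nc_pos {V : Type*} [Finite V] (G : SimpleGraph V) {s : Set V} (hs : s.Nonempty) :
    1 ≤ nc G s := by
  have : Nonempty s := hs.to_subtype
  have : Nonempty (G.induce s).ConnectedComponent :=
    ⟨(G.induce s).connectedComponentMk this.some⟩
  exact Nat.card_pos

lemma nonempty_of_nc_pos {V : Type*} {G : SimpleGraph V} {s : Set V} (h : 0 < nc G s) :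
    s.Nonempty := by
  have : Nonempty (G.induce s).ConnectedComponent := (Nat.card_pos_iff.mp h).1
  obtain ⟨c⟩ := this
  obtain ⟨v, -⟩ := c.exists_rep
  exact ⟨v, v.2⟩

lemma nc_image_inl {V₁ V₂ : Type*} (G₁ : SimpleGraph V₁) (G₂ : SimpleGraph V₂) (s : Set V₁) :
    nc (joinGraph G₁ G₂) (Sum.inl '' s) = nc G₁ s := by
  have iso : G₁.induce s ≃g (joinGraph G₁ G₂).induce (Sum.inl '' s) := by
    refine ⟨Equiv.Set.image Sum.inl s Sum.inl_injective, ?_⟩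
    rintro ⟨a, ha⟩ ⟨b, hb⟩
    simp only [Equiv.Set.image_apply, comap_adj, Function.Embedding.coe_subtype]
    exact Iff.rfl
  exact (Nat.card_congr iso.connectedComponentEquiv).symm

lemma nc_image_inr {V₁ V₂ : Type*} (G₁ : SimpleGraph V₁) (G₂ : SimpleGraph V₂) (s : Set V₂) :
    nc (joinGraph G₁ G₂) (Sum.inr '' s) = nc G₂ s := by
  have iso : G₂.induce s ≃g (joinGraph G₁ G₂).induce (Sum.inr '' s) := by
    refine ⟨Equiv.Set.image Sum.inr s Sum.inr_injective, ?_⟩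
    rintro ⟨a, ha⟩ ⟨b, hb⟩
    simp only [Equiv.Set.image_apply, comap_adj, Function.Embedding.coe_subtype]
    exact Iff.rfl
  exact (Nat.card_congr iso.connectedComponentEquiv).symm

lemma joinGraph_mixed_connected {V₁ V₂ : Type*} (G₁ : SimpleGraph V₁) (G₂ : SimpleGraph V₂)
    {s : Set (V₁ ⊕ V₂)} (ha : ∃ a, Sum.inl a ∈ s) (hb : ∃ b, Sum.inr b ∈ s) :
    ((joinGraph G₁ G₂).induce s).Connected := by
  obtain ⟨a, ha⟩ := ha
  obtain ⟨b, hb⟩ := hb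
  have key : ∀ x : s, ((joinGraph G₁ G₂).induce s).Reachable x ⟨Sum.inr b, hb⟩ := by
    rintro ⟨(u | u), hu⟩
    · exact SimpleGraph.Adj.reachable (by trivial)
    · refine SimpleGraph.Reachable.trans (SimpleGraph.Adj.reachable (v := (⟨Sum.inl a, ha⟩ : s)) (by trivial)) ?_
      exact SimpleGraph.Adj.reachable (by trivial)
  have : Nonempty s := ⟨⟨Sum.inl a, ha⟩⟩
  exact ⟨fun x y => (key x).trans (key y).symm⟩

lemma nc_univ_eq_one {V : Type*} {G : SimpleGraph V} (h : G.Connected) :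
    nc G Set.univ = 1 := by
  rw [nc, Nat.card_congr (induceUnivIso G).connectedComponentEquiv]
  have : Subsingleton G.ConnectedComponent := by
    constructor
    refine ConnectedComponent.ind₂ (fun u v => ?_)
    exact ConnectedComponent.sound (h.preconnected u v)
  have : Nonempty G.ConnectedComponent := by
    obtain ⟨v⟩ := h.nonempty
    exact ⟨G.connectedComponentMk v⟩
  exact Nat.card_unique

lemma compl_inl_union {V₁ V₂ : Type*} (T₁ : Set V₁) :
    (Sum.inl '' T₁ ∪ Set.range Sum.inr : Set (V₁ ⊕ V₂))ᶜ = Sum.inl '' T₁ᶜ := by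
  ext (a | b) <;> simp

lemma compl_inr_union {V₁ V₂ : Type*} (T₂ : Set V₂) :
    (Sum.inr '' T₂ ∪ Set.range Sum.inl : Set (V₁ ⊕ V₂))ᶜ = Sum.inr '' T₂ᶜ := by
  ext (a | b) <;> simp


/-- the nonempty sets with the cut point property for the join of two
connected graphs. -/
theorem stmt1 {V₁ V₂ : Type*} [Fintype V₁] [Fintype V₂]
    (G₁ : SimpleGraph V₁) (G₂ : SimpleGraph V₂)
    (h₁ : G₁.Connected) (h₂ : G₂.Connected)
    (T : Set (V₁ ⊕ V₂)) (hT : T.Nonempty) :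
    CutPointProperty (joinGraph G₁ G₂) T ↔
      (∃ T₁ : Set V₁, T₁.Nonempty ∧ CutPointProperty G₁ T₁ ∧
        T = Sum.inl '' T₁ ∪ Set.range Sum.inr) ∨
      (∃ T₂ : Set V₂, T₂.Nonempty ∧ CutPointProperty G₂ T₂ ∧
        T = Sum.inr '' T₂ ∪ Set.range Sum.inl) := by
  set G := joinGraph G₁ G₂ with hG
  constructor
  · intro hcut
    obtain ⟨i, hi⟩ := hT
    have h1 : 1 ≤ nc G (Tᶜ ∪ {i}) := nc_pos _ ⟨i, Or.inr rfl⟩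
    have h2 : 2 ≤ nc G Tᶜ := by have := hcut i hi; omega
    have hnm : ¬ ((∃ a, Sum.inl a ∈ Tᶜ) ∧ (∃ b, Sum.inr b ∈ Tᶜ)) := by
      rintro ⟨ha, hb⟩
      have := nc_eq_one_of_connected (joinGraph_mixed_connected G₁ G₂ ha hb)
      rw [← hG] at this
      omega
    rw [not_and_or] at hnm
    rcases hnm with hnm | hnm
    · -- no inl in Tᶜ, so Tᶜ ⊆ range inr : right case
      right
      push_neg at hnm
      set T₂ : Set V₂ := Sum.inr ⁻¹' T with hT₂
      have hTeq : T = Sum.inr '' T₂ ∪ Set.range Sum.inl := by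
        ext (a | b)
        · simp only [Set.mem_union, Set.mem_range, Set.mem_image]
          constructor
          · intro _; exact Or.inr ⟨a, rfl⟩
          · intro _
            by_contra h
            exact hnm a h
        · simp [hT₂]
      have hTc : Tᶜ = Sum.inr '' T₂ᶜ := by rw [hTeq, compl_inr_union]
      have hnc : nc G Tᶜ = nc G₂ T₂ᶜ := by rw [hTc]; exact nc_image_inr G₁ G₂ _
      have hT₂ne : T₂.Nonempty := by
        by_contra h
        rw [Set.not_nonempty_iff_eq_empty] at h
        rw [h, Set.compl_empty] at hnc
        rw [nc_univ_eq_one h₂] at hnc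
        omega
      refine ⟨T₂, hT₂ne, ?_, hTeq⟩
      intro a ha
      have := hcut (Sum.inr a) ha
      rw [hTc, ← Set.image_singleton, ← Set.image_union, nc_image_inr, nc_image_inr] at this
      exact this
    · -- no inr in Tᶜ : left case
      left
      push_neg at hnm
      set T₁ : Set V₁ := Sum.inl ⁻¹' T with hT₁
      have hTeq : T = Sum.inl '' T₁ ∪ Set.range Sum.inr := by
        ext (a | b)
        · simp [hT₁]
        · simp only [Set.mem_union, Set.mem_range, Set.mem_image]
          constructor
          · intro _; exact Or.inr ⟨b, rfl⟩
          · intro _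
            by_contra h
            exact hnm b h
      have hTc : Tᶜ = Sum.inl '' T₁ᶜ := by rw [hTeq, compl_inl_union]
      have hnc : nc G Tᶜ = nc G₁ T₁ᶜ := by rw [hTc]; exact nc_image_inl G₁ G₂ _
      have hT₁ne : T₁.Nonempty := by
        by_contra h
        rw [Set.not_nonempty_iff_eq_empty] at h
        rw [h, Set.compl_empty] at hnc
        rw [nc_univ_eq_one h₁] at hnc
        omega
      refine ⟨T₁, hT₁ne, ?_, hTeq⟩
      intro a ha
      have := hcut (Sum.inl a) ha
      rw [hTc, ← Set.image_singleton, ← Set.image_union, nc_image_inl, nc_image_inl] at this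
      exact this
  · rintro (⟨T₁, hne, hcpp, rfl⟩ | ⟨T₂, hne, hcpp, rfl⟩)
    · have hTc : (Sum.inl '' T₁ ∪ Set.range Sum.inr : Set (V₁ ⊕ V₂))ᶜ = Sum.inl '' T₁ᶜ :=
        compl_inl_union T₁
      obtain ⟨a₀, ha₀⟩ := hne
      have h1 : 1 ≤ nc G₁ (T₁ᶜ ∪ {a₀}) := nc_pos _ ⟨a₀, Or.inr rfl⟩
      have h2 : 2 ≤ nc G₁ T₁ᶜ := by have := hcpp a₀ ha₀; omega
      have hT₁c : T₁ᶜ.Nonempty := nonempty_of_nc_pos (G := G₁) (by omega)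
      rintro (a | b) hi
      · have ha : a ∈ T₁ := by
          rcases hi with h | h
          · obtain ⟨x, hx, hxe⟩ := h; cases hxe; exact hx
          · obtain ⟨x, hx⟩ := h; cases hx
        rw [hTc, ← Set.image_singleton, ← Set.image_union, nc_image_inl, nc_image_inl]
        exact hcpp a ha
      · obtain ⟨c, hc⟩ := hT₁c
        have hmix : ((joinGraph G₁ G₂).induce ((Sum.inl '' T₁ ∪ Set.range Sum.inr)ᶜ ∪ {Sum.inr b})).Connected := by
          refine joinGraph_mixed_connected G₁ G₂ ⟨c, Or.inl ?_⟩ ⟨b, Or.inr rfl⟩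
          rw [hTc]; exact ⟨c, hc, rfl⟩
        have := nc_eq_one_of_connected hmix
        rw [hG, this, hTc, nc_image_inl]
        omega
    · have hTc : (Sum.inr '' T₂ ∪ Set.range Sum.inl : Set (V₁ ⊕ V₂))ᶜ = Sum.inr '' T₂ᶜ :=
        compl_inr_union T₂
      obtain ⟨a₀, ha₀⟩ := hne
      have h1 : 1 ≤ nc G₂ (T₂ᶜ ∪ {a₀}) := nc_pos _ ⟨a₀, Or.inr rfl⟩
      have h2 : 2 ≤ nc G₂ T₂ᶜ := by have := hcpp a₀ ha₀; omega
      have hT₂c : T₂ᶜ.Nonempty := nonempty_of_nc_pos (G := G₂) (by omega)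
      rintro (a | b) hi
      · obtain ⟨c, hc⟩ := hT₂c
        have hmix : ((joinGraph G₁ G₂).induce ((Sum.inr '' T₂ ∪ Set.range Sum.inl)ᶜ ∪ {Sum.inl a})).Connected := by
          refine joinGraph_mixed_connected G₁ G₂ ⟨a, Or.inr rfl⟩ ⟨c, Or.inl ?_⟩
          rw [hTc]; exact ⟨c, hc, rfl⟩
        have := nc_eq_one_of_connected hmix
        rw [hG, this, hTc, nc_image_inr]
        omega
      · have hb : b ∈ T₂ := by
          rcases hi with h | h
          · obtain ⟨x, hx, hxe⟩ := h; cases hxe; exact hx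
          · obtain ⟨x, hx⟩ := h; cases hx
        rw [hTc, ← Set.image_singleton, ← Set.image_union, nc_image_inr, nc_image_inr]
        exact hcpp b hb
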